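/- Let L be a positive integer, H a real L×L matrix, P > 0 a real number, and a ∈ ℝ^L. Define F = H Hᵀ + (1/P)·I_L, b* = F⁻¹ H a, and Q = I_L − Hᵀ F⁻¹ H. Then (1/P)·‖b*‖² + ‖Hᵀ b* − a‖² = aᵀ Q a; equivalently, ‖b*‖² + P·‖Hᵀ b* − a‖² = P · (aᵀ Q a). -/

import Mathlib

open Matrix

/-- At the optimal projection `b* = F⁻¹ H a` with `F = H Hᵀ + P⁻¹ I`, the objective value
equals the quadratic form of `Q = I − Hᵀ F⁻¹ H`:
`(1/P)‖b*‖² + ‖Hᵀ b* − a‖² = aᵀ Q a`, equivalently `‖b*‖² + P‖Hᵀ b* − a‖² = P (aᵀ Q a)`. -/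
theorem if_rate_quadratic_form (L : ℕ) (hL : 0 < L)
    (H : Matrix (Fin L) (Fin L) ℝ) (P : ℝ) (hP : 0 < P) (a : Fin L → ℝ) :
    let F : Matrix (Fin L) (Fin L) ℝ := H * Hᵀ + (1 / P) • (1 : Matrix (Fin L) (Fin L) ℝ)
    let bstar : Fin L → ℝ := F⁻¹ *ᵥ (H *ᵥ a)
    let Q : Matrix (Fin L) (Fin L) ℝ := 1 - Hᵀ * F⁻¹ * H
    (1 / P) * (bstar ⬝ᵥ bstar) + (Hᵀ *ᵥ bstar - a) ⬝ᵥ (Hᵀ *ᵥ bstar - a) = a ⬝ᵥ (Q *ᵥ a)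
    ∧ (bstar ⬝ᵥ bstar) + P * ((Hᵀ *ᵥ bstar - a) ⬝ᵥ (Hᵀ *ᵥ bstar - a)) = P * (a ⬝ᵥ (Q *ᵥ a)) := by
  intro F bstar Q
  -- F is positive definite, hence invertible
  have hHHT : (H * Hᵀ).PosSemidef := by
    simpa using Matrix.posSemidef_self_mul_conjTranspose H
  have hsmul : ((1 / P) • (1 : Matrix (Fin L) (Fin L) ℝ)).PosDef := by
    constructor
    · simp [Matrix.IsHermitian]
    · intro x hx
      have : (0:ℝ) < 1 / P := by positivity
      exact (Matrix.PosDef.one.smul this).2 hx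
  have hF : F.PosDef := Matrix.PosDef.posSemidef_add hHHT hsmul
  have hFu : IsUnit F := hF.isUnit
  have hFb : F *ᵥ bstar = H *ᵥ a := by
    show F *ᵥ (F⁻¹ *ᵥ (H *ᵥ a)) = H *ᵥ a
    rw [Matrix.mulVec_mulVec, Matrix.mul_nonsing_inv F ((Matrix.isUnit_iff_isUnit_det F).mp hFu),
      Matrix.one_mulVec]
  -- key dot product facts
  have key1 : (Hᵀ *ᵥ bstar) ⬝ᵥ (Hᵀ *ᵥ bstar) + (1 / P) * (bstar ⬝ᵥ bstar)
      = bstar ⬝ᵥ (H *ᵥ a) := by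
    rw [← hFb]
    show _ = bstar ⬝ᵥ ((H * Hᵀ + (1 / P) • (1 : Matrix (Fin L) (Fin L) ℝ)) *ᵥ bstar)
    rw [Matrix.add_mulVec, dotProduct_add, Matrix.smul_mulVec,
      Matrix.one_mulVec, dotProduct_smul]
    congr 1
    rw [← Matrix.mulVec_mulVec, Matrix.dotProduct_mulVec, Matrix.vecMul_transpose]
    exact (dotProduct_comm _ _)
  have key2 : a ⬝ᵥ (Hᵀ *ᵥ bstar) = (H *ᵥ a) ⬝ᵥ bstar := by
    rw [Matrix.dotProduct_mulVec, Matrix.vecMul_transpose]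
  have key3 : a ⬝ᵥ (Q *ᵥ a) = a ⬝ᵥ a - a ⬝ᵥ (Hᵀ *ᵥ bstar) := by
    show a ⬝ᵥ ((1 - Hᵀ * F⁻¹ * H) *ᵥ a) = _
    rw [Matrix.sub_mulVec, dotProduct_sub, Matrix.one_mulVec]
    congr 2
    show (Hᵀ * F⁻¹ * H) *ᵥ a = Hᵀ *ᵥ (F⁻¹ *ᵥ (H *ᵥ a))
    rw [Matrix.mulVec_mulVec, Matrix.mulVec_mulVec]
  have expand : (Hᵀ *ᵥ bstar - a) ⬝ᵥ (Hᵀ *ᵥ bstar - a)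
      = (Hᵀ *ᵥ bstar) ⬝ᵥ (Hᵀ *ᵥ bstar) - 2 * (a ⬝ᵥ (Hᵀ *ᵥ bstar)) + a ⬝ᵥ a := by
    rw [sub_dotProduct, dotProduct_sub, dotProduct_sub,
      dotProduct_comm a (Hᵀ *ᵥ bstar)]
    ring
  have hcomm : bstar ⬝ᵥ (H *ᵥ a) = (H *ᵥ a) ⬝ᵥ bstar := dotProduct_comm _ _
  have main : (1 / P) * (bstar ⬝ᵥ bstar) + (Hᵀ *ᵥ bstar - a) ⬝ᵥ (Hᵀ *ᵥ bstar - a)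
      = a ⬝ᵥ (Q *ᵥ a) := by
    rw [expand, key3, key2]
    nlinarith [key1, key2, hcomm]
  refine ⟨main, ?_⟩
  have := congrArg (fun x => P * x) main
  simp only [mul_add, ← mul_assoc] at this
  rw [mul_one_div, div_self hP.ne', one_mul] at this
  linarith [this]
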